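/- Let a>0, c>0 and set t_c := a(a+2√c), b_c := a+√c, γ_c := 2·b_c^{1/3}·c^{1/6}/a^{1/3}. Fix s>0 and for N>0 set t_N := t_c + 2·b_c·s/(γ_c·N^{2/3}) and β_N := ( a² + t_N − √((t_N−a²)² − 4a²c) )/(2a) (nonnegative real square root; note β_N > a for large N, so the logarithms below are real). Define t·ℓ(t_N) := (t_N + c)·log β_N − c·log(β_N − a) − a·β_N. Then, as N→∞, t·ℓ(t_N) = −a·b_c + b_c²·log b_c − (c/2)·log c + 2·b_c·s·log(b_c)/(γ_c·N^{2/3}) − 2·s^{3/2}/(3N) + O(N^{−4/3}). -/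

import Mathlib

set_option maxHeartbeats 1000000

open Filter

/-- `b_c = a + √c`. -/
noncomputable def bcD (a c : ℝ) : ℝ := a + Real.sqrt c

/-- `t_c = a(a + 2√c)`. -/
noncomputable def tcD (a c : ℝ) : ℝ := a * (a + 2 * Real.sqrt c)

/-- `γ_c = 2 b_c^{1/3} c^{1/6} / a^{1/3}`. -/
noncomputable def gamD (a c : ℝ) : ℝ :=
  2 * bcD a c ^ ((1 : ℝ) / 3) * c ^ ((1 : ℝ) / 6) / a ^ ((1 : ℝ) / 3)

/-- The critical point `β(t)` of `φ`. -/
noncomputable def betaFun (a c t : ℝ) : ℝ :=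
  (a ^ 2 + t - Real.sqrt ((t - a ^ 2) ^ 2 - 4 * a ^ 2 * c)) / (2 * a)

/-- The critical time in the Painlevé II window: `t_N = t_c + 2 b_c s/(γ_c N^{2/3})`. -/
noncomputable def tNCrit (a c s N : ℝ) : ℝ :=
  tcD a c + 2 * bcD a c * s / (gamD a c * N ^ ((2 : ℝ) / 3))

/-- `t·ℓ(t) = (t+c) log β(t) - c log(β(t)-a) - a β(t)`. -/
noncomputable def tEll (a c t : ℝ) : ℝ :=
  (t + c) * Real.log (betaFun a c t) - c * Real.log (betaFun a c t - a)
    - a * betaFun a c t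

/-- Cubic Taylor remainder bound for `log(1+u)`. -/
lemma logRem (u : ℝ) (hu : |u| ≤ 1/2) :
    |Real.log (1+u) - (u - u^2/2 + u^3/3)| ≤ 2*u^4 := by
  have h1 : |(-u)| < 1 := by rw [abs_neg]; linarith
  have key := Real.abs_log_sub_add_sum_range_le h1 3
  rw [sub_neg_eq_add, abs_neg] at key
  have hsum : ∑ i ∈ Finset.range 3, (-u) ^ (i + 1) / ((i : ℝ) + 1)
      = -u + u^2/2 - u^3/3 := by
    simp [Finset.sum_range_succ]; ring
  rw [hsum, show (-u + u^2/2 - u^3/3 + Real.log (1 + u))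
      = Real.log (1+u) - (u - u^2/2 + u^3/3) by ring] at key
  have h3 : |u|^4 = u^4 := by rw [← abs_pow, abs_of_nonneg (by positivity)]
  have h4 : |u| ^ (3+1) / (1 - |u|) ≤ 2*u^4 := by
    rw [div_le_iff₀ (by linarith)]
    rw [show |u|^(3+1) = u^4 from h3]
    nlinarith [pow_nonneg (abs_nonneg u) 4, sq_nonneg u]
  exact key.trans h4

/-- Bound on `|E(x) + m x|`, where `E(x) = (Kx² - x√(K²x²+Q))/(2a)`. -/
lemma Ebound2 (a K Q m C2 x : ℝ) (ha : 0 < a) (hK : 0 < K) (hQ : 0 < Q)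
    (hm : m = Real.sqrt Q/(2*a)) (hC2 : C2 = (K + K^2/Real.sqrt Q)/(2*a))
    (hx : 0 < x) (hx1 : x ≤ 1) :
    |(K*x^2 - x*Real.sqrt (K^2*x^2 + Q))/(2*a) + m*x| ≤ C2*x^2 := by
  have hQs : 0 < Real.sqrt Q := Real.sqrt_pos.mpr hQ
  have hqnn : (0:ℝ) ≤ K^2*x^2 + Q := by positivity
  have hS : Real.sqrt Q ≤ Real.sqrt (K^2*x^2+Q) :=
    Real.sqrt_le_sqrt (le_add_of_nonneg_left (by positivity))
  have hprod : (Real.sqrt (K^2*x^2+Q) - Real.sqrt Q)*(Real.sqrt (K^2*x^2+Q) + Real.sqrt Q)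
      = K^2*x^2 := by
    have h1 : Real.sqrt (K^2*x^2+Q)^2 = K^2*x^2+Q := Real.sq_sqrt hqnn
    have h2 : Real.sqrt Q^2 = Q := Real.sq_sqrt hQ.le
    linear_combination h1 - h2
  have hub : Real.sqrt (K^2*x^2+Q) - Real.sqrt Q ≤ K^2*x^2/Real.sqrt Q := by
    rw [le_div_iff₀ hQs]
    nlinarith [Real.sqrt_nonneg (K^2*x^2+Q), sub_nonneg.mpr hS]
  have hEeq : (K*x^2 - x*Real.sqrt (K^2*x^2 + Q))/(2*a) + m*x
      = (K*x^2 - x*(Real.sqrt (K^2*x^2+Q) - Real.sqrt Q))/(2*a) := by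
    rw [hm]; field_simp; ring
  rw [hEeq, abs_div, abs_of_pos (by positivity : (0:ℝ) < 2*a),
    div_le_iff₀ (by positivity : (0:ℝ) < 2*a)]
  have hd0 : 0 ≤ Real.sqrt (K^2*x^2+Q) - Real.sqrt Q := sub_nonneg.mpr hS
  have habs : |K*x^2 - x*(Real.sqrt (K^2*x^2+Q) - Real.sqrt Q)|
      ≤ K*x^2 + x*(Real.sqrt (K^2*x^2+Q) - Real.sqrt Q) := by
    apply abs_le.mpr
    constructor <;> nlinarith [mul_nonneg hx.le hd0, mul_pos (mul_pos hK hx) hx]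
  have hxd : x*(Real.sqrt (K^2*x^2+Q) - Real.sqrt Q) ≤ K^2/Real.sqrt Q*x^2 := by
    have h6 : x*(Real.sqrt (K^2*x^2+Q) - Real.sqrt Q) ≤ x*(K^2*x^2/Real.sqrt Q) :=
      mul_le_mul_of_nonneg_left hub hx.le
    have h7 : x*(K^2*x^2/Real.sqrt Q) ≤ K^2/Real.sqrt Q*x^2 := by
      rw [show K^2/Real.sqrt Q*x^2 = K^2*x^2/Real.sqrt Q by ring]
      exact mul_le_of_le_one_left (by positivity) hx1
    linarith
  calc |K*x^2 - x*(Real.sqrt (K^2*x^2+Q) - Real.sqrt Q)|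
      ≤ K*x^2 + x*(Real.sqrt (K^2*x^2+Q) - Real.sqrt Q) := habs
    _ ≤ K*x^2 + K^2/Real.sqrt Q*x^2 := by linarith
    _ = C2*x^2*(2*a) := by rw [hC2]; field_simp

/-- Linear bound on `|E(x)|`. -/
lemma Ebound1 (a K Q m C2 x : ℝ) (ha : 0 < a) (hK : 0 < K) (hQ : 0 < Q)
    (hmpos : 0 < m)
    (hm : m = Real.sqrt Q/(2*a)) (hC2 : C2 = (K + K^2/Real.sqrt Q)/(2*a))
    (hx : 0 < x) (hx1 : x ≤ 1) :
    |(K*x^2 - x*Real.sqrt (K^2*x^2 + Q))/(2*a)| ≤ (C2+m)*x := by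
  have h1 := Ebound2 a K Q m C2 x ha hK hQ hm hC2 hx hx1
  have h2 : |(K*x^2 - x*Real.sqrt (K^2*x^2 + Q))/(2*a)|
      ≤ |(K*x^2 - x*Real.sqrt (K^2*x^2 + Q))/(2*a) + m*x| + |m*x| := by
    have := abs_add_le ((K*x^2 - x*Real.sqrt (K^2*x^2 + Q))/(2*a) + m*x) (-(m*x))
    simpa using this
  have hmx : |m*x| = m*x := abs_of_pos (by positivity)
  have h3 : C2*x^2 ≤ C2*x := by
    have hC2pos : 0 < C2 := by rw [hC2]; positivity
    have hx2 : x^2 ≤ x := by nlinarith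
    exact mul_le_mul_of_nonneg_left hx2 hC2pos.le
  rw [hmx] at h2
  nlinarith

lemma quadBnd (e m x C1 : ℝ) (hm : 0 < m) (hx : 0 < x)
    (h1 : -(C1*x) ≤ e) (h2 : e ≤ C1*x) :
    |e^2 - m*x*e + m^2*x^2| ≤ (C1^2+m*C1+m^2)*x^2 := by
  have hsq : e^2 ≤ C1^2*x^2 := by nlinarith
  have hme1 : m*x*e ≤ m*C1*x^2 := by nlinarith [mul_pos hm hx]
  have hme2 : -(m*C1*x^2) ≤ m*x*e := by nlinarith [mul_pos hm hx]
  apply abs_le.mpr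
  constructor <;> nlinarith [sq_nonneg e, sq_nonneg (m*x)]

lemma cubBnd (u B : ℝ) (hu1 : -(1/2) ≤ u) (hu2 : u ≤ 1/2) (hsq : u^2 ≤ B) (hB : 0 ≤ B) :
    |u^3/3 - u^2/2| ≤ B := by
  have hu3a : u^3 ≤ (1/2)*u^2 := by nlinarith [sq_nonneg u]
  have hu3b : -((1/2)*u^2) ≤ u^3 := by nlinarith [sq_nonneg u]
  apply abs_le.mpr
  constructor
  · linarith
  · linarith [sq_nonneg u]

/-- The comparison function in the fourth-order expansion. -/
noncomputable def Gfun (a bc sc K m e x : ℝ) : ℝ :=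
  (bc^2+K*x^2)*(Real.log (1+e/bc) - (e/bc - (e/bc)^2/2 + (e/bc)^3/3))
  - sc^2*(Real.log (1+e/sc) - (e/sc - (e/sc)^2/2 + (e/sc)^3/3))
  + (-(a/(3*bc*sc)))*(e^3 + m^3*x^3) + (K/bc)*(x^2*e + m*x^3)
  + K*x^2*((e/bc)^3/3 - (e/bc)^2/2)

/-- `Gfun` is of fourth order. -/
lemma Gbound (a bc sc K m C1 C2 CT e x : ℝ) (ha : 0 < a) (hbc : 0 < bc) (hsc : 0 < sc)
    (hK : 0 < K) (hm : 0 < m) (hC1 : 0 ≤ C1) (hC2 : 0 ≤ C2)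
    (hCT : CT = (bc^2+K)*(2*(C1/bc)^4) + sc^2*(2*(C1/sc)^4)
      + (a/(3*bc*sc))*(C2*(C1^2+m*C1+m^2)) + (K/bc)*C2 + K*(C1/bc)^2)
    (hx : 0 < x) (hx1 : x ≤ 1) (hE1 : |e| ≤ C1*x) (hE2 : |e+m*x| ≤ C2*x^2)
    (hEb : |e| ≤ bc/2) (hEs : |e| ≤ sc/2) :
    |Gfun a bc sc K m e x| ≤ CT*x^4 := by
  have hel := abs_le.mp hE1
  have hx4 : (0:ℝ) < x^4 := by positivity
  have hu2 : |e/bc| ≤ 1/2 := by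
    rw [abs_div, abs_of_pos hbc, div_le_iff₀ hbc]; linarith [hEb]
  have hv2 : |e/sc| ≤ 1/2 := by
    rw [abs_div, abs_of_pos hsc, div_le_iff₀ hsc]; linarith [hEs]
  have hu1 : |e/bc| ≤ (C1/bc)*x := by
    rw [abs_div, abs_of_pos hbc, div_le_iff₀ hbc]
    calc |e| ≤ C1*x := hE1
      _ = C1/bc*x*bc := by field_simp
  have hv1 : |e/sc| ≤ (C1/sc)*x := by
    rw [abs_div, abs_of_pos hsc, div_le_iff₀ hsc]
    calc |e| ≤ C1*x := hE1
      _ = C1/sc*x*sc := by field_simp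
  have hu4 : (e/bc)^4 ≤ (C1/bc)^4*x^4 := by
    have h1 : |e/bc|^4 ≤ ((C1/bc)*x)^4 := pow_le_pow_left₀ (abs_nonneg _) hu1 4
    calc (e/bc)^4 = |e/bc|^4 := by rw [← abs_pow, abs_of_nonneg (by positivity)]
      _ ≤ ((C1/bc)*x)^4 := h1
      _ = (C1/bc)^4*x^4 := by ring
  have hv4 : (e/sc)^4 ≤ (C1/sc)^4*x^4 := by
    have h1 : |e/sc|^4 ≤ ((C1/sc)*x)^4 := pow_le_pow_left₀ (abs_nonneg _) hv1 4
    calc (e/sc)^4 = |e/sc|^4 := by rw [← abs_pow, abs_of_nonneg (by positivity)]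
      _ ≤ ((C1/sc)*x)^4 := h1
      _ = (C1/sc)^4*x^4 := by ring
  have tA : |(bc^2+K*x^2)*(Real.log (1+e/bc) - (e/bc - (e/bc)^2/2 + (e/bc)^3/3))|
      ≤ (bc^2+K)*(2*(C1/bc)^4)*x^4 := by
    rw [abs_mul]
    have h1 : |bc^2+K*x^2| ≤ bc^2+K := by
      rw [abs_of_pos (by positivity)]
      have hx2 : x^2 ≤ 1 := by nlinarith
      nlinarith
    have h2 := logRem (e/bc) hu2
    calc |bc^2+K*x^2| * |Real.log (1+e/bc) - (e/bc - (e/bc)^2/2 + (e/bc)^3/3)|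
        ≤ (bc^2+K) * (2*(e/bc)^4) := by
          apply mul_le_mul h1 h2 (abs_nonneg _) (by positivity)
      _ ≤ (bc^2+K)*(2*((C1/bc)^4*x^4)) := by
          apply mul_le_mul_of_nonneg_left (by linarith) (by positivity)
      _ = (bc^2+K)*(2*(C1/bc)^4)*x^4 := by ring
  have tB : |sc^2*(Real.log (1+e/sc) - (e/sc - (e/sc)^2/2 + (e/sc)^3/3))|
      ≤ sc^2*(2*(C1/sc)^4)*x^4 := by
    rw [abs_mul]
    have h2 := logRem (e/sc) hv2
    calc |sc^2| * |Real.log (1+e/sc) - (e/sc - (e/sc)^2/2 + (e/sc)^3/3)|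
        ≤ sc^2 * (2*(e/sc)^4) := by
          rw [abs_of_pos (by positivity)]
          apply mul_le_mul_of_nonneg_left h2 (by positivity)
      _ ≤ sc^2*(2*((C1/sc)^4*x^4)) := by
          apply mul_le_mul_of_nonneg_left (by linarith) (by positivity)
      _ = sc^2*(2*(C1/sc)^4)*x^4 := by ring
  have tC : |(-(a/(3*bc*sc)))*(e^3 + m^3*x^3)|
      ≤ (a/(3*bc*sc))*(C2*(C1^2+m*C1+m^2))*x^4 := by
    rw [abs_mul, abs_neg, abs_of_pos (by positivity : (0:ℝ) < a/(3*bc*sc))]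
    have hquad : |e^2 - m*x*e + m^2*x^2| ≤ (C1^2+m*C1+m^2)*x^2 :=
      quadBnd e m x C1 hm hx hel.1 hel.2
    have hfact : |e^3 + m^3*x^3| ≤ C2*x^2*((C1^2+m*C1+m^2)*x^2) := by
      calc |e^3 + m^3*x^3| = |e+m*x| * |e^2 - m*x*e + m^2*x^2| := by
            rw [← abs_mul]; congr 1; ring
        _ ≤ C2*x^2*((C1^2+m*C1+m^2)*x^2) :=
            mul_le_mul hE2 hquad (abs_nonneg _) (by positivity)
    calc (a/(3*bc*sc)) * |e^3 + m^3*x^3|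
        ≤ (a/(3*bc*sc)) * (C2*x^2*((C1^2+m*C1+m^2)*x^2)) :=
          mul_le_mul_of_nonneg_left hfact (by positivity)
      _ = (a/(3*bc*sc))*(C2*(C1^2+m*C1+m^2))*x^4 := by ring
  have tD : |(K/bc)*(x^2*e + m*x^3)| ≤ (K/bc)*C2*x^4 := by
    rw [abs_mul, abs_of_pos (by positivity : (0:ℝ) < K/bc)]
    have h1 : |x^2*e + m*x^3| ≤ x^2*(C2*x^2) := by
      calc |x^2*e + m*x^3| = |x^2| * |e + m*x| := by
            rw [← abs_mul]; congr 1; ring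
        _ = x^2 * |e+m*x| := by rw [abs_of_pos (by positivity)]
        _ ≤ x^2*(C2*x^2) := mul_le_mul_of_nonneg_left hE2 (by positivity)
    calc (K/bc) * |x^2*e + m*x^3| ≤ (K/bc) * (x^2*(C2*x^2)) :=
          mul_le_mul_of_nonneg_left h1 (by positivity)
      _ = (K/bc)*C2*x^4 := by ring
  have tE : |K*x^2*((e/bc)^3/3 - (e/bc)^2/2)| ≤ K*(C1/bc)^2*x^4 := by
    rw [abs_mul, abs_of_pos (by positivity : (0:ℝ) < K*x^2)]
    have hu2' := abs_le.mp hu2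
    have h1 : |(e/bc)^3/3 - (e/bc)^2/2| ≤ (C1/bc)^2*x^2 := by
      have hsq : (e/bc)^2 ≤ (C1/bc)^2*x^2 := by
        have := pow_le_pow_left₀ (abs_nonneg (e/bc)) hu1 2
        calc (e/bc)^2 = |e/bc|^2 := by rw [← abs_pow, abs_of_nonneg (by positivity)]
          _ ≤ ((C1/bc)*x)^2 := this
          _ = (C1/bc)^2*x^2 := by ring
      exact cubBnd (e/bc) ((C1/bc)^2*x^2) hu2'.1 hu2'.2 hsq (by positivity)
    calc K*x^2 * |(e/bc)^3/3 - (e/bc)^2/2| ≤ K*x^2*((C1/bc)^2*x^2) :=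
          mul_le_mul_of_nonneg_left h1 (by positivity)
      _ = K*(C1/bc)^2*x^4 := by ring
  have abs5 : ∀ A B C D E : ℝ, |A - B + C + D + E| ≤ |A|+|B|+|C|+|D|+|E| := by
    intro A B C D E
    calc |A - B + C + D + E| ≤ |A - B + C + D| + |E| := abs_add_le _ _
      _ ≤ (|A - B + C| + |D|) + |E| := by gcongr; exact abs_add_le _ _
      _ ≤ ((|A - B| + |C|) + |D|) + |E| := by gcongr; exact abs_add_le _ _
      _ ≤ (((|A| + |B|) + |C|) + |D|) + |E| := by gcongr; exact abs_sub _ _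
      _ = |A|+|B|+|C|+|D|+|E| := by ring
  rw [Gfun, hCT]
  refine (abs5 _ _ _ _ _).trans ?_
  calc _ ≤ (bc^2+K)*(2*(C1/bc)^4)*x^4 + sc^2*(2*(C1/sc)^4)*x^4
        + (a/(3*bc*sc))*(C2*(C1^2+m*C1+m^2))*x^4 + (K/bc)*C2*x^4 + K*(C1/bc)^2*x^4 := by
        linarith [tA, tB, tC, tD, tE]
    _ = ((bc^2+K)*(2*(C1/bc)^4) + sc^2*(2*(C1/sc)^4)
        + (a/(3*bc*sc))*(C2*(C1^2+m*C1+m^2)) + (K/bc)*C2 + K*(C1/bc)^2)*x^4 := by ring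

/-- The key algebraic identity behind the expansion. -/
lemma keyid (a sc bc c K s32 e x Lu Lv lb lc : ℝ) (hbc : bc = a + sc) (hc2 : sc^2 = c)
    (hbne : bc ≠ 0) (hsne : sc ≠ 0) :
    (bc^2 + K*x^2)*(lb+Lu) - c*(lc+Lv) - a*(bc+e)
      - (-(a*bc) + bc^2*lb - c*lc + K*lb*x^2 - (2/3)*s32*x^3)
    = (bc^2+K*x^2)*(Lu - (e/bc - (e/bc)^2/2 + (e/bc)^3/3))
      - sc^2*(Lv - (e/sc - (e/sc)^2/2 + (e/sc)^3/3))
      + (-(a/(3*bc*sc)))*(e^3) + (K/bc)*(x^2*e)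
      + K*x^2*((e/bc)^3/3 - (e/bc)^2/2) + (2/3)*s32*x^3 := by
  subst hbc; subst hc2
  field_simp
  ring

/-- Pointwise identity: the expansion error equals `Gfun`. -/
lemma hidpt (a c sc bc K m s32 Q e x : ℝ) (ha : 0 < a) (hc : 0 < c) (hx : 0 < x)
    (hscpos : 0 < sc) (hbcpos : 0 < bc)
    (hsc : sc = Real.sqrt c) (hbc : bc = a + sc) (hsc2 : sc^2 = c)
    (hQ : Q = 4*a*sc*K)
    (he : e = (K*x^2 - x*Real.sqrt (K^2*x^2+Q))/(2*a))
    (hEb : |e| ≤ bc/2) (hEs : |e| ≤ sc/2)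
    (hco : (2/3)*s32 + (a/(3*bc*sc))*m^3 - (K/bc)*m = 0) :
    tEll a c (tcD a c + K*x^2)
      - ((-(a*bc) + bc^2*Real.log bc - c/2*Real.log c) + K*Real.log bc*x^2 - (2/3)*s32*x^3)
    = Gfun a bc sc K m e x := by
  have hbE : 0 < bc + e := by linarith [(abs_le.mp hEb).1]
  have hsE : 0 < sc + e := by linarith [(abs_le.mp hEs).1]
  have hupos : 0 < 1 + e/bc := by
    rw [show 1 + e/bc = (bc+e)/bc by field_simp]; positivity
  have hvpos : 0 < 1 + e/sc := by
    rw [show 1 + e/sc = (sc+e)/sc by field_simp]; positivity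
  have hdisc : (tcD a c + K*x^2 - a^2)^2 - 4*a^2*c = x^2*(K^2*x^2+Q) := by
    rw [tcD, ← hsc, hQ]
    linear_combination 4*a^2*hsc2
  have hsqrt : Real.sqrt ((tcD a c + K*x^2 - a^2)^2 - 4*a^2*c)
      = x * Real.sqrt (K^2*x^2+Q) := by
    rw [hdisc, Real.sqrt_mul (sq_nonneg x), Real.sqrt_sq hx.le]
  have hbeta : betaFun a c (tcD a c + K*x^2) = bc + e := by
    rw [betaFun, hsqrt, he, hbc, tcD, ← hsc]
    field_simp
    ring
  have hlogb : Real.log (bc + e) = Real.log bc + Real.log (1 + e/bc) := by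
    rw [show bc + e = bc*(1+e/bc) by field_simp, Real.log_mul hbcpos.ne' hupos.ne']
  have hlogs : Real.log (bc + e - a) = Real.log c/2 + Real.log (1 + e/sc) := by
    rw [show bc + e - a = sc*(1+e/sc) by rw [hbc]; field_simp; ring,
      Real.log_mul hscpos.ne' hvpos.ne', hsc, Real.log_sqrt hc.le]
  have htcc : tcD a c + K*x^2 + c = bc^2 + K*x^2 := by
    rw [tcD, ← hsc, hbc]
    linear_combination -hsc2
  rw [tEll, hbeta, hlogb, hlogs, htcc, Gfun]
  have hk := keyid a sc bc c K s32 e x (Real.log (1+e/bc)) (Real.log (1+e/sc))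
    (Real.log bc) (Real.log c/2) hbc hsc2 hbcpos.ne' hscpos.ne'
  linear_combination hk + x^3*hco

/-- Expansion of `t ℓ` at the critical time:
`t ℓ(t_N) = -a b_c + b_c² log b_c - (c/2) log c + 2 b_c s log b_c/(γ_c N^{2/3})
  - 2 s^{3/2}/(3N) + O(N^{-4/3})`. -/
theorem statement17 (a c s : ℝ) (ha : 0 < a) (hc : 0 < c) (hs : 0 < s) :
    (fun N : ℝ => tEll a c (tNCrit a c s N)
        - (-(a * bcD a c) + bcD a c ^ 2 * Real.log (bcD a c) - c / 2 * Real.log c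
          + 2 * bcD a c * s * Real.log (bcD a c) / (gamD a c * N ^ ((2 : ℝ) / 3))
          - 2 * s ^ ((3 : ℝ) / 2) / (3 * N)))
      =O[atTop] fun N : ℝ => N ^ (-(4 : ℝ) / 3) := by
  set sc := Real.sqrt c with hsc_def
  set bc := bcD a c with hbc_def
  set γ := gamD a c with hγ_def
  set K := 2*bc*s/γ with hK_def
  set s32 := s^((3:ℝ)/2) with hs32_def
  have hscpos : 0 < sc := Real.sqrt_pos.mpr hc
  have hsc2 : sc^2 = c := Real.sq_sqrt hc.le
  have hbc : bc = a + sc := by rw [hbc_def, bcD, hsc_def]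
  have hbcpos : 0 < bc := by rw [hbc]; positivity
  have hγpos : 0 < γ := by rw [hγ_def, gamD, ← hbc_def]; positivity
  have hγ3 : γ^3 = 8 * bc * sc / a := by
    rw [hγ_def, gamD, div_pow, mul_pow, mul_pow, ← hbc_def]
    rw [← Real.rpow_natCast (bc ^ ((1:ℝ)/3)) 3, ← Real.rpow_natCast (c ^ ((1:ℝ)/6)) 3,
      ← Real.rpow_natCast (a ^ ((1:ℝ)/3)) 3,
      ← Real.rpow_mul hbcpos.le, ← Real.rpow_mul hc.le, ← Real.rpow_mul ha.le]
    norm_num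
    rw [← Real.sqrt_eq_rpow, ← hsc_def]
  have hs32pos : 0 < s32 := by rw [hs32_def]; positivity
  have hs32sq : s32^2 = s^3 := by
    rw [hs32_def, ← Real.rpow_natCast (s ^ ((3:ℝ)/2)) 2, ← Real.rpow_mul hs.le]
    norm_num
  have hKγ : K * γ = 2*bc*s := by rw [hK_def]; field_simp
  clear_value sc bc γ K s32
  have hKpos : 0 < K := by rw [hK_def]; positivity
  have hK3 : sc * K^3 = a * bc^2 * s^3 := by
    have h8 : (K*γ)^3 = 8*bc^3*s^3 := by rw [hKγ]; ring
    have h9 : K^3 * (8*bc*sc/a) = 8*bc^3*s^3 := by rw [← hγ3]; linear_combination h8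
    field_simp at h9
    nlinarith [h9]
  set Q := 4*a*sc*K with hQ_def
  set m := Real.sqrt Q/(2*a) with hm_def
  have hQpos : 0 < Q := by rw [hQ_def]; positivity
  have hmpos : 0 < m := by rw [hm_def]; positivity
  have hm2 : m^2 = sc*K/a := by
    rw [hm_def, div_pow, Real.sq_sqrt hQpos.le, hQ_def]
    field_simp; ring
  clear_value Q m
  have hmK : m*K = bc*s32 := by
    have h1 : (m*K)^2 = (bc*s32)^2 := by
      rw [mul_pow, mul_pow, hm2, hs32sq]
      field_simp
      linear_combination hK3
    have h2 : (m*K - bc*s32)*(m*K + bc*s32) = 0 := by linear_combination h1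
    rcases mul_eq_zero.mp h2 with h|h
    · linarith
    · nlinarith [mul_pos hmpos hKpos, mul_pos hbcpos hs32pos]
  have hco : (2/3)*s32 + (a/(3*bc*sc))*m^3 - (K/bc)*m = 0 := by
    have h3 : a*m^3 = sc*K*m := by
      rw [show m^3 = m^2*m by ring, hm2]; field_simp
    field_simp
    linear_combination h3 - 2*sc*hmK
  -- constants
  set C2 : ℝ := (K + K^2/Real.sqrt Q)/(2*a) with hC2_def
  have hC2pos : 0 < C2 := by
    rw [hC2_def]
    have := Real.sqrt_pos.mpr hQpos
    positivity
  set C1 : ℝ := C2 + m with hC1_def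
  have hC1pos : 0 < C1 := by rw [hC1_def]; positivity
  clear_value C2 C1
  set CT : ℝ := (bc^2+K)*(2*(C1/bc)^4) + sc^2*(2*(C1/sc)^4)
      + (a/(3*bc*sc))*(C2*(C1^2+m*C1+m^2)) + (K/bc)*C2 + K*(C1/bc)^2 with hCT_def
  clear_value CT
  set x₀ : ℝ := min 1 (min (bc/(2*C1)) (sc/(2*C1))) with hx0_def
  have hx0pos : 0 < x₀ := by
    rw [hx0_def]
    refine lt_min one_pos (lt_min (by positivity) (by positivity))
  have hx0le1 : x₀ ≤ 1 := by rw [hx0_def]; exact min_le_left _ _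
  have hx0b : x₀ ≤ bc/(2*C1) := by
    rw [hx0_def]; exact le_trans (min_le_right _ _) (min_le_left _ _)
  have hx0s : x₀ ≤ sc/(2*C1) := by
    rw [hx0_def]; exact le_trans (min_le_right _ _) (min_le_right _ _)
  clear_value x₀
  have hmem : Set.Ioo (0:ℝ) x₀ ∈ nhdsWithin (0:ℝ) (Set.Ioi 0) :=
    Ioo_mem_nhdsGT_of_mem ⟨le_refl 0, hx0pos⟩
  -- the main one-variable big-O estimate
  have hFO : (fun x : ℝ => tEll a c (tcD a c + K*x^2)
      - ((-(a*bc) + bc^2*Real.log bc - c/2*Real.log c) + K*Real.log bc*x^2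
        - (2/3)*s32*x^3))
      =O[nhdsWithin (0:ℝ) (Set.Ioi 0)] (fun x => x^4) := by
    rw [Asymptotics.isBigO_iff]
    refine ⟨CT, ?_⟩
    filter_upwards [hmem] with x hx
    obtain ⟨hx1, hx2⟩ := hx
    have hxle1 : x ≤ 1 := le_trans hx2.le hx0le1
    have hE1 : |(K*x^2 - x*Real.sqrt (K^2*x^2 + Q))/(2*a)| ≤ C1*x := by
      rw [hC1_def]
      exact Ebound1 a K Q m C2 x ha hKpos hQpos hmpos hm_def hC2_def hx1 hxle1
    have hE2 : |(K*x^2 - x*Real.sqrt (K^2*x^2 + Q))/(2*a) + m*x| ≤ C2*x^2 :=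
      Ebound2 a K Q m C2 x ha hKpos hQpos hm_def hC2_def hx1 hxle1
    have hEb : |(K*x^2 - x*Real.sqrt (K^2*x^2 + Q))/(2*a)| ≤ bc/2 := by
      calc |(K*x^2 - x*Real.sqrt (K^2*x^2 + Q))/(2*a)| ≤ C1*x := hE1
        _ ≤ C1*(bc/(2*C1)) := by
            apply mul_le_mul_of_nonneg_left (le_trans hx2.le hx0b) hC1pos.le
        _ = bc/2 := by field_simp
    have hEs : |(K*x^2 - x*Real.sqrt (K^2*x^2 + Q))/(2*a)| ≤ sc/2 := by
      calc |(K*x^2 - x*Real.sqrt (K^2*x^2 + Q))/(2*a)| ≤ C1*x := hE1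
        _ ≤ C1*(sc/(2*C1)) := by
            apply mul_le_mul_of_nonneg_left (le_trans hx2.le hx0s) hC1pos.le
        _ = sc/2 := by field_simp
    rw [hidpt a c sc bc K m s32 Q ((K*x^2 - x*Real.sqrt (K^2*x^2 + Q))/(2*a)) x
      ha hc hx1 hscpos hbcpos hsc_def hbc hsc2 hQ_def rfl hEb hEs hco]
    have := Gbound a bc sc K m C1 C2 CT ((K*x^2 - x*Real.sqrt (K^2*x^2 + Q))/(2*a)) x
      ha hbcpos hscpos hKpos hmpos hC1pos.le hC2pos.le hCT_def hx1 hxle1 hE1 hE2 hEb hEs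
    rw [Real.norm_eq_abs, Real.norm_eq_abs, abs_of_nonneg (by positivity : (0:ℝ) ≤ x^4)]
    exact this
  -- transfer to N → ∞
  have htk : Tendsto (fun N : ℝ => N ^ (-(1/3) : ℝ)) atTop
      (nhdsWithin (0:ℝ) (Set.Ioi 0)) := by
    apply tendsto_nhdsWithin_of_tendsto_nhds_of_eventually_within
    · exact tendsto_rpow_neg_atTop (by norm_num)
    · filter_upwards [eventually_gt_atTop (0:ℝ)] with N hN
      exact Real.rpow_pos_of_pos hN _
  have hcomp := hFO.comp_tendsto htk
  apply hcomp.congr'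
  · filter_upwards [eventually_gt_atTop (0:ℝ)] with N hN
    simp only [Function.comp]
    have hp2 : (N ^ (-(1/3) : ℝ))^(2:ℕ) = (N ^ ((2:ℝ)/3))⁻¹ := by
      rw [← Real.rpow_natCast (N ^ (-(1/3) : ℝ)) 2, ← Real.rpow_mul hN.le]
      rw [show (-(1/3) : ℝ)*((2:ℕ):ℝ) = -(2/3) by norm_num, Real.rpow_neg hN.le]
    have hp3 : (N ^ (-(1/3) : ℝ))^(3:ℕ) = N⁻¹ := by
      rw [← Real.rpow_natCast (N ^ (-(1/3) : ℝ)) 3, ← Real.rpow_mul hN.le]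
      rw [show (-(1/3) : ℝ)*((3:ℕ):ℝ) = -1 by norm_num, Real.rpow_neg_one]
    have hNe : (N : ℝ) ^ ((2:ℝ)/3) ≠ 0 := (Real.rpow_pos_of_pos hN _).ne'
    have harg : tcD a c + K*(N ^ (-(1/3) : ℝ))^2 = tNCrit a c s N := by
      rw [tNCrit, ← hbc_def, ← hγ_def, hp2, hK_def]
      field_simp
    have h2a : K*Real.log bc*(N ^ (-(1/3) : ℝ))^2
        = 2*bc*s*Real.log bc/(γ*N^((2:ℝ)/3)) := by
      rw [hp2, hK_def]
      field_simp
    have h3a : (2/3)*s32*(N ^ (-(1/3) : ℝ))^3 = 2*s32/(3*N) := by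
      rw [hp3]
      field_simp
    rw [harg]
    linear_combination -h2a + h3a
  · filter_upwards [eventually_gt_atTop (0:ℝ)] with N hN
    simp only [Function.comp]
    rw [← Real.rpow_natCast (N ^ (-(1/3) : ℝ)) 4, ← Real.rpow_mul hN.le]
    norm_num
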